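/- Let u be a unit timelike Jacobi-type field along a timelike geodesic γ in a Lorentzian manifold of constant curvature −1, written as x'(t) = u₀ + u₁ cos t + u₂ sin t, v'(t) = −u₁ sin t + u₂ cos t with u₀, u₁, u₂ parallel along γ, u₀ tangent to γ and u₁, u₂ orthogonal to γ. Then the quantity ‖v'(t) + v × x'(t)‖² is independent of t, where v = γ'(t) and × is the Lorentzian cross product; explicitly it equals ‖−u₁ + v × u₂‖². -/

import Mathlib

/-- Invariance of the left metric under the geodesic flow (Lemma 7.5),
algebraic form.  Along a timelike geodesic `γ` in a Lorentzian manifold of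
constant curvature `-1`, a Jacobi field has the form
`x'(t) = u₀ + cos t • u₁ + sin t • u₂`, `v'(t) = -sin t • u₁ + cos t • u₂`
with `u₀, u₁, u₂` parallel, `u₀` tangent to `γ` and `u₁, u₂` orthogonal to
`γ`.  The operator `J = v × ·` (cross product with the unit tangent `v`)
kills `u₀` and restricts to the plane `P = v^⊥ ⊇ {u₁, u₂}` as an isometry with
`J² = -1`.  Then `‖v'(t) + v × x'(t)‖²` is independent of `t`, equal to
`‖-u₁ + J u₂‖²`. -/
theorem stmt19 {V : Type*} [NormedAddCommGroup V] [InnerProductSpace ℝ V]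
    (J : V →ₗ[ℝ] V) (P : Submodule ℝ V)
    (hJP : ∀ w ∈ P, J w ∈ P)
    (hJinner : ∀ w ∈ P, ∀ w' ∈ P, (inner ℝ (J w) (J w') : ℝ) = inner ℝ w w')
    (hJ2 : ∀ w ∈ P, J (J w) = -w)
    (u₀ u₁ u₂ : V) (hu₁ : u₁ ∈ P) (hu₂ : u₂ ∈ P) (hJu₀ : J u₀ = 0)
    (x' v' : ℝ → V)
    (hx' : ∀ t : ℝ, x' t = u₀ + Real.cos t • u₁ + Real.sin t • u₂)
    (hv' : ∀ t : ℝ, v' t = -(Real.sin t • u₁) + Real.cos t • u₂) :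
    ∀ t : ℝ, ‖v' t + J (x' t)‖ ^ 2 = ‖-u₁ + J u₂‖ ^ 2 := by
  intro t
  set a : V := -u₁ + J u₂ with ha
  have haP : a ∈ P := P.add_mem (P.neg_mem hu₁) (hJP _ hu₂)
  have hJa : J a = -(u₂ + J u₁) := by
    simp only [ha, map_add, map_neg, hJ2 u₂ hu₂]
    abel
  have key : v' t + J (x' t) = Real.sin t • a - Real.cos t • J a := by
    rw [hv', hx', hJa, ha]
    simp only [map_add, map_smul, hJu₀]
    module
  have hnJa : ‖J a‖ ^ 2 = ‖a‖ ^ 2 := by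
    rw [← real_inner_self_eq_norm_sq, ← real_inner_self_eq_norm_sq,
      hJinner a haP a haP]
  have horth : (inner ℝ a (J a) : ℝ) = 0 := by
    have h1 : (inner ℝ (J a) (J (J a)) : ℝ) = inner ℝ a (J a) := hJinner a haP (J a) (hJP a haP)
    rw [hJ2 a haP, inner_neg_right, real_inner_comm] at h1
    linarith
  rw [key, norm_sub_sq_real, real_inner_smul_left, real_inner_smul_right,
    horth, norm_smul, norm_smul, mul_pow, mul_pow, hnJa, Real.norm_eq_abs,
    Real.norm_eq_abs, sq_abs, sq_abs]
  have := Real.sin_sq_add_cos_sq t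
  nlinarith [this]
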